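/- Let a,b,p ∈ ℝ, c not a nonpositive integer, and let u_n = Σ_{k=0}^{n} ((a)_k(b)_k)/(k!(c)_k)·(-p)_{n-k}/(n-k)! be the coefficients in the power series expansion (1-x)^p F(a,b;c;x) = Σ u_n x^n. Then u_0 = 1, u_1 = ab/c - p, and for all n ≥ 1, u_{n+1} = 2α_n u_n - β_n u_{n-1}, where α_n = (2n² + (a+b+c-2p-1)n + ab - cp)/(2(n+1)(n+c)) and β_n = (n+a-p-1)(n+b-p-1)/((n+1)(n+c)). -/
import Mathlib

open Polynomial

/-- Pochhammer symbol `(a)_n` for real `a`. -/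
noncomputable def poch (a : ℝ) (n : ℕ) : ℝ := (ascPochhammer ℝ n).eval a

/-- Gaussian hypergeometric function `F(a,b;c;z)`. -/
noncomputable def hypF (a b c z : ℝ) : ℝ :=
  ∑' n : ℕ, poch a n * poch b n / poch c n * z ^ n / n.factorial

private lemma poch_zero' (x : ℝ) : poch x 0 = 1 := by simp [poch]

private lemma poch_succ' (x : ℝ) (n : ℕ) : poch x (n+1) = poch x n * (x + n) := by
  simp [poch, ascPochhammer_succ_right]

section aux

variable (a b c p : ℝ)

private noncomputable def Fc (k : ℕ) : ℝ :=
  poch a k * poch b k / (k.factorial * poch c k)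

private noncomputable def Gc (j : ℕ) : ℝ := poch (-p) j / j.factorial

private noncomputable def Pm (j m : ℕ) : ℝ :=
  ∑ k ∈ Finset.range (m+1), (k:ℝ)^j * Fc a b c k * Gc p (m-k)

private lemma Gc_rec (j : ℕ) :
    ((j:ℝ)+1) * Gc p (j+1) = ((j:ℝ) - p) * Gc p j := by
  have h1 : ((j.factorial : ℝ)) ≠ 0 := Nat.cast_ne_zero.mpr j.factorial_ne_zero
  have h2 : ((j:ℝ)+1) ≠ 0 := by positivity
  rw [Gc, Gc, poch_succ', Nat.factorial_succ]
  push_cast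
  field_simp
  ring

private lemma Fc_rec (k : ℕ) (hck : poch c k ≠ 0) (hcpk : c + (k:ℝ) ≠ 0) :
    ((k:ℝ)+1) * ((k:ℝ)+c) * Fc a b c (k+1) = ((k:ℝ)+a) * ((k:ℝ)+b) * Fc a b c k := by
  have h1 : ((k.factorial : ℝ)) ≠ 0 := Nat.cast_ne_zero.mpr k.factorial_ne_zero
  have h2 : ((k:ℝ)+1) ≠ 0 := by positivity
  rw [Fc, Fc, poch_succ', poch_succ', poch_succ', Nat.factorial_succ]
  push_cast
  field_simp
  ring

private lemma L1 (hcp : ∀ k : ℕ, poch c k ≠ 0) (hc' : ∀ k : ℕ, c + (k:ℝ) ≠ 0) (m : ℕ) :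
    Pm a b c p 2 (m+1) + (c-1) * Pm a b c p 1 (m+1)
      = Pm a b c p 2 m + (a+b) * Pm a b c p 1 m + a*b * Pm a b c p 0 m := by
  have hL : Pm a b c p 2 (m+1) + (c-1) * Pm a b c p 1 (m+1)
      = ∑ k ∈ Finset.range (m+2), ((k:ℝ) * ((k:ℝ)+c-1)) * Fc a b c k * Gc p (m+1-k) := by
    rw [Pm, Pm, Finset.mul_sum, ← Finset.sum_add_distrib]
    refine Finset.sum_congr rfl fun k _ => by ring
  have hR : Pm a b c p 2 m + (a+b) * Pm a b c p 1 m + a*b * Pm a b c p 0 m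
      = ∑ k ∈ Finset.range (m+1), (((k:ℝ)+a) * ((k:ℝ)+b)) * Fc a b c k * Gc p (m-k) := by
    rw [Pm, Pm, Pm, Finset.mul_sum, Finset.mul_sum, ← Finset.sum_add_distrib,
      ← Finset.sum_add_distrib]
    refine Finset.sum_congr rfl fun k _ => by ring
  rw [hL, hR, Finset.sum_range_succ']
  simp only [Nat.cast_zero, zero_mul, zero_add, mul_zero, add_zero]
  have hcong : ∀ i ∈ Finset.range (m+1),
      (((i+1 : ℕ)):ℝ) * ((((i+1 : ℕ)):ℝ)+c-1) * Fc a b c (i+1) * Gc p (m+1-(i+1))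
        = (((i:ℝ)+a) * ((i:ℝ)+b)) * Fc a b c i * Gc p (m-i) := by
    intro i _
    have h := Fc_rec a b c i (hcp i) (hc' i)
    have hidx : m + 1 - (i+1) = m - i := by omega
    rw [hidx]
    push_cast
    calc ((i:ℝ)+1) * ((i:ℝ)+1+c-1) * Fc a b c (i+1) * Gc p (m-i)
        = (((i:ℝ)+1) * ((i:ℝ)+c) * Fc a b c (i+1)) * Gc p (m-i) := by ring
      _ = (((i:ℝ)+a) * ((i:ℝ)+b) * Fc a b c i) * Gc p (m-i) := by rw [h]
      _ = ((i:ℝ)+a) * ((i:ℝ)+b) * Fc a b c i * Gc p (m-i) := by ring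
  rw [Finset.sum_congr rfl hcong]

private lemma L2 (j m : ℕ) :
    ((m:ℝ)+1) * Pm a b c p j (m+1) - Pm a b c p (j+1) (m+1)
      = ((m:ℝ)-p) * Pm a b c p j m - Pm a b c p (j+1) m := by
  have hL : ((m:ℝ)+1) * Pm a b c p j (m+1) - Pm a b c p (j+1) (m+1)
      = ∑ k ∈ Finset.range (m+2), (((m:ℝ)+1-(k:ℝ)) * (k:ℝ)^j) * Fc a b c k * Gc p (m+1-k) := by
    rw [Pm, Pm, Finset.mul_sum, ← Finset.sum_sub_distrib]
    refine Finset.sum_congr rfl fun k _ => by rw [pow_succ]; ring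
  have hR : ((m:ℝ)-p) * Pm a b c p j m - Pm a b c p (j+1) m
      = ∑ k ∈ Finset.range (m+1), ((((m:ℝ)-(k:ℝ))-p) * (k:ℝ)^j) * Fc a b c k * Gc p (m-k) := by
    rw [Pm, Pm, Finset.mul_sum, ← Finset.sum_sub_distrib]
    refine Finset.sum_congr rfl fun k _ => by rw [pow_succ]; ring
  rw [hL, hR, Finset.sum_range_succ]
  have hz : ((m:ℝ)+1-((m+1:ℕ):ℝ)) = 0 := by push_cast; ring
  rw [hz]
  simp only [zero_mul, add_zero]
  refine Finset.sum_congr rfl fun k hk => ?_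
  have hkm : k ≤ m := Nat.lt_succ_iff.mp (Finset.mem_range.mp hk)
  obtain ⟨t, rfl⟩ : ∃ t, m = k + t := ⟨m - k, by omega⟩
  have h1 : k + t + 1 - k = t + 1 := by omega
  have h2 : k + t - k = t := by omega
  rw [h1, h2]
  have hg := Gc_rec p t
  push_cast
  calc ((k:ℝ)+(t:ℝ)+1-(k:ℝ)) * (k:ℝ)^j * Fc a b c k * Gc p (t+1)
      = ((k:ℝ)^j * Fc a b c k) * (((t:ℝ)+1) * Gc p (t+1)) := by ring
    _ = ((k:ℝ)^j * Fc a b c k) * (((t:ℝ)-p) * Gc p t) := by rw [hg]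
    _ = ((k:ℝ)+(t:ℝ)-(k:ℝ)-p) * (k:ℝ)^j * Fc a b c k * Gc p t := by ring

end aux

theorem u_recurrence_two_term (a b c p : ℝ) (hc : ∀ n : ℕ, c ≠ -(n : ℝ))
    (u : ℕ → ℝ)
    (hu : ∀ n, u n = ∑ k ∈ Finset.range (n + 1),
      poch a k * poch b k / (k.factorial * poch c k) *
        (poch (-p) (n - k) / (n - k).factorial)) :
    u 0 = 1 ∧ u 1 = a * b / c - p ∧
      ∀ n : ℕ, 1 ≤ n →
        u (n + 1) =
          2 * ((2 * (n : ℝ) ^ 2 + (a + b + c - 2 * p - 1) * (n : ℝ) + a * b - c * p)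
              / (2 * ((n : ℝ) + 1) * ((n : ℝ) + c))) * u n
          - (((n : ℝ) + a - p - 1) * ((n : ℝ) + b - p - 1)
              / (((n : ℝ) + 1) * ((n : ℝ) + c))) * u (n - 1) := by
  have hc' : ∀ k : ℕ, c + (k:ℝ) ≠ 0 := by
    intro k h
    exact hc k (by linarith)
  have hcp : ∀ k : ℕ, poch c k ≠ 0 := by
    intro k
    induction k with
    | zero => simp [poch_zero']
    | succ n ih =>
        rw [poch_succ']
        exact mul_ne_zero ih (hc' n)
  have hc0 : c ≠ 0 := by
    have := hc' 0; simpa using this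
  have hP : ∀ m, u m = Pm a b c p 0 m := by
    intro m
    rw [hu m, Pm]
    refine Finset.sum_congr rfl fun k _ => ?_
    simp [Fc, Gc]
  refine ⟨?_, ?_, ?_⟩
  · rw [hu 0]
    simp [poch_zero']
  · rw [hu 1, Finset.sum_range_succ, Finset.sum_range_one]
    simp only [Nat.sub_self, Nat.sub_zero]
    have h1 : poch a 1 = a := by simp [poch]
    have h2 : poch b 1 = b := by simp [poch]
    have h3 : poch c 1 = c := by simp [poch]
    have h4 : poch (-p) 1 = -p := by simp [poch]
    simp only [h1, h2, h3, h4, poch_zero']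
    field_simp
    ring
  · intro n hn
    obtain ⟨m, rfl⟩ : ∃ m, n = m + 1 := ⟨n - 1, by omega⟩
    have hE1 := L1 a b c p hcp hc' (m+1)
    have hE1' := L1 a b c p hcp hc' m
    have hE2 := L2 a b c p 0 (m+1)
    have hE2' := L2 a b c p 0 m
    have hE3 := L2 a b c p 1 (m+1)
    have hE3' := L2 a b c p 1 m
    norm_num at hE1 hE1' hE2 hE2' hE3 hE3'
    push_cast at hE2 hE3 ⊢
    have key : ((m:ℝ)+2) * ((m:ℝ)+1+c) * u (m+1+1)
        = (2*((m:ℝ)+1)^2 + (a+b+c-2*p-1)*((m:ℝ)+1) + a*b - c*p) * u (m+1)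
          - (((m:ℝ)+a-p) * ((m:ℝ)+b-p)) * u m := by
      rw [hP (m+1+1), hP (m+1), hP m]
      linear_combination ((m:ℝ)+1+c) * hE2 + hE1 + hE3 - hE1' - hE3'
        - ((m:ℝ)+a+b-p) * hE2'
    have hm2 : ((m:ℝ)+1+1) ≠ 0 := by positivity
    have hmc : ((m:ℝ)+1+c) ≠ 0 := by
      have h := hc' (m+1); push_cast at h
      intro hh; exact h (by linarith)
    have hrhs : 2 * ((2 * ((m:ℝ)+1) ^ 2 + (a + b + c - 2 * p - 1) * ((m:ℝ)+1) + a * b - c * p)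
              / (2 * (((m:ℝ)+1) + 1) * (((m:ℝ)+1) + c))) * u (m+1)
          - ((((m:ℝ)+1) + a - p - 1) * (((m:ℝ)+1) + b - p - 1)
              / ((((m:ℝ)+1) + 1) * (((m:ℝ)+1) + c))) * u m
        = ((2*((m:ℝ)+1)^2 + (a+b+c-2*p-1)*((m:ℝ)+1) + a*b - c*p) * u (m+1)
            - (((m:ℝ)+a-p) * ((m:ℝ)+b-p)) * u m) / ((((m:ℝ)+2)) * ((m:ℝ)+1+c)) := by
      field_simp
      ring
    rw [hrhs, eq_div_iff (mul_ne_zero (by positivity : ((m:ℝ)+2) ≠ 0) hmc)]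
    linear_combination key
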